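/- Let k be a field of characteristic 2 and consider the power series ring R[[a,b,c]] over a commutative k-algebra R. Let f = c² + a³ + b³ and let g ∈ R[[a,b,c]] be any element of the ideal (a³b², a²b³). Then there is an R-algebra automorphism φ of R[[a,b,c]] with φ(f + g) = f. In particular R[[a,b,c]]/(c² + a³ + b³ + s²a³b² + r²a²b³) ≅ R[[a,b,c]]/(c² + a³ + b³) for any r, s ∈ R. -/

import Mathlib

set_option synthInstance.maxHeartbeats 1000000
set_option maxHeartbeats 2000000

open MvPowerSeries

namespace Stmt16Aux

variable {R : Type*} [CommRing R]

abbrev S3 (R : Type*) [CommRing R] := MvPowerSeries (Fin 3) R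

/-- total degree of an exponent -/
def wt (e : Fin 3 →₀ ℕ) : ℕ := ∑ i, e i

lemma wt_add (e f : Fin 3 →₀ ℕ) : wt (e + f) = wt e + wt f := by
  simp [wt, Finsupp.add_apply, Finset.sum_add_distrib]

lemma wt_eq_zero {e : Fin 3 →₀ ℕ} (h : wt e = 0) : e = 0 := by
  ext i
  have := Finset.sum_eq_zero_iff.mp h i (Finset.mem_univ i)
  simpa using this

lemma apply_le_wt (e : Fin 3 →₀ ℕ) (i : Fin 3) : e i ≤ wt e :=
  Finset.single_le_sum (f := fun j => e j) (fun _ _ => Nat.zero_le _) (Finset.mem_univ i)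

/-- `EqN n x y` : `x` and `y` agree in all coefficients of total degree `< n`. -/
def EqN (n : ℕ) (x y : MvPowerSeries (Fin 3) R) : Prop :=
  ∀ e, wt e < n → coeff e x = coeff e y

/-- `OrdN n x` : `x` has order at least `n`. -/
def OrdN (n : ℕ) (x : MvPowerSeries (Fin 3) R) : Prop :=
  ∀ e, wt e < n → coeff e x = 0

lemma EqN.refl (n : ℕ) (x : MvPowerSeries (Fin 3) R) : EqN n x x := fun _ _ => rfl

lemma EqN.symm {n : ℕ} {x y : MvPowerSeries (Fin 3) R} (h : EqN n x y) : EqN n y x :=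
  fun e he => (h e he).symm

lemma EqN.trans {n : ℕ} {x y z : MvPowerSeries (Fin 3) R} (h : EqN n x y) (h' : EqN n y z) :
    EqN n x z := fun e he => (h e he).trans (h' e he)

lemma EqN.mono {m n : ℕ} {x y : MvPowerSeries (Fin 3) R} (hmn : m ≤ n) (h : EqN n x y) :
    EqN m x y := fun e he => h e (lt_of_lt_of_le he hmn)

lemma OrdN.mono {m n : ℕ} {x : MvPowerSeries (Fin 3) R} (hmn : m ≤ n) (h : OrdN n x) :
    OrdN m x := fun e he => h e (lt_of_lt_of_le he hmn)

lemma EqN.add {n : ℕ} {x y x' y' : MvPowerSeries (Fin 3) R} (h : EqN n x x') (h' : EqN n y y') :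
    EqN n (x + y) (x' + y') := fun e he => by
  simp only [map_add, h e he, h' e he]

lemma EqN.mul {n : ℕ} {x y x' y' : MvPowerSeries (Fin 3) R} (h : EqN n x x') (h' : EqN n y y') :
    EqN n (x * y) (x' * y') := by
  intro e he
  classical
  rw [coeff_mul, coeff_mul]
  refine Finset.sum_congr rfl fun p hp => ?_
  rw [Finset.HasAntidiagonal.mem_antidiagonal] at hp
  have h1 : wt p.1 < n := lt_of_le_of_lt (by rw [← hp, wt_add]; omega) he
  have h2 : wt p.2 < n := lt_of_le_of_lt (by rw [← hp, wt_add]; omega) he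
  rw [h p.1 h1, h' p.2 h2]

lemma EqN.pow {n : ℕ} {x x' : MvPowerSeries (Fin 3) R} (h : EqN n x x') (m : ℕ) :
    EqN n (x ^ m) (x' ^ m) := by
  induction m with
  | zero => simpa using EqN.refl n 1
  | succ m ih => rw [pow_succ, pow_succ]; exact ih.mul h

lemma OrdN.mul {m n : ℕ} {x y : MvPowerSeries (Fin 3) R} (hx : OrdN m x) (hy : OrdN n y) :
    OrdN (m + n) (x * y) := by
  intro e he
  classical
  rw [coeff_mul]
  refine Finset.sum_eq_zero fun p hp => ?_
  rw [Finset.HasAntidiagonal.mem_antidiagonal] at hp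
  have : wt p.1 + wt p.2 < m + n := by rw [← wt_add, hp]; exact he
  rcases lt_or_ge (wt p.1) m with h1 | h1
  · rw [hx p.1 h1, zero_mul]
  · rw [hy p.2 (by omega), mul_zero]

lemma OrdN.mul_left {n : ℕ} (x : MvPowerSeries (Fin 3) R) {y : MvPowerSeries (Fin 3) R}
    (hy : OrdN n y) : OrdN n (x * y) := by
  have h0 : OrdN 0 x := fun e he => absurd he (by omega)
  simpa using h0.mul hy

lemma OrdN.pow {n : ℕ} {x : MvPowerSeries (Fin 3) R} (h : OrdN n x) (m : ℕ) :
    OrdN (m * n) (x ^ m) := by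
  induction m with
  | zero => intro e he; omega
  | succ m ih =>
    rw [pow_succ, Nat.succ_mul]
    exact ih.mul h

lemma ordN_X (i : Fin 3) : OrdN 1 (X i : MvPowerSeries (Fin 3) R) := by
  intro e he
  have : e = 0 := wt_eq_zero (by omega)
  subst this
  simp [coeff_zero_eq_constantCoeff]

/-- `u * x ≡ u * y  (mod deg (n+k))` if `x ≡ y (mod deg n)` and `u` has order `≥ k`. -/
lemma EqN.mul_ord {n k : ℕ} {u x y : MvPowerSeries (Fin 3) R} (hu : OrdN k u)
    (h : EqN n x y) : EqN (n + k) (u * x) (u * y) := by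
  intro e he
  classical
  rw [coeff_mul, coeff_mul]
  refine Finset.sum_congr rfl fun p hp => ?_
  rw [Finset.HasAntidiagonal.mem_antidiagonal] at hp
  rcases lt_or_ge (wt p.1) k with h1 | h1
  · rw [hu p.1 h1, zero_mul, zero_mul]
  · have : wt p.1 + wt p.2 = wt e := by rw [← wt_add, hp]
    rw [h p.2 (by omega)]

lemma OrdN.sub {n : ℕ} {x y : MvPowerSeries (Fin 3) R} (h : EqN n x y) : OrdN n (x - y) := by
  intro e he; rw [map_sub, h e he, sub_self]

lemma EqN.of_sub {n : ℕ} {x y : MvPowerSeries (Fin 3) R} (h : OrdN n (x - y)) : EqN n x y := by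
  intro e he
  have := h e he
  rw [map_sub, sub_eq_zero] at this
  exact this

lemma eq_of_forall_eqN {x y : MvPowerSeries (Fin 3) R} (h : ∀ n, EqN n x y) : x = y := by
  ext e
  exact h (wt e + 1) e (by omega)


lemma ordN_prodpow {σ : Fin 3 → MvPowerSeries (Fin 3) R} (hσ : ∀ i, OrdN 1 (σ i))
    (d : Fin 3 →₀ ℕ) : OrdN (wt d) (∏ i, σ i ^ d i) := by
  have key : ∀ s : Finset (Fin 3), OrdN (∑ i ∈ s, d i) (∏ i ∈ s, σ i ^ d i) := by
    intro s
    induction s using Finset.induction with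
    | empty => intro e he; simp at he
    | insert a s' hnot ih =>
      rw [Finset.sum_insert hnot, Finset.prod_insert hnot]
      have h1 : OrdN (d a) (σ a ^ d a) := by simpa using (hσ a).pow (d a)
      exact h1.mul ih
  exact key Finset.univ

/-- bound exponent -/
noncomputable def bnd (e : Fin 3 →₀ ℕ) : Fin 3 →₀ ℕ :=
  Finsupp.equivFunOnFinite.symm fun _ => wt e

lemma bnd_apply (e : Fin 3 →₀ ℕ) (i : Fin 3) : bnd e i = wt e := rfl

/-- range of summation -/
noncomputable def rng (e : Fin 3 →₀ ℕ) : Finset (Fin 3 →₀ ℕ) := Finset.Iic (bnd e)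

lemma mem_rng_of_wt_le {d e : Fin 3 →₀ ℕ} (h : wt d ≤ wt e) : d ∈ rng e := by
  rw [rng, Finset.mem_Iic, Finsupp.le_def]
  intro i
  rw [bnd_apply]
  exact le_trans (apply_le_wt d i) h

lemma wt_le_of_mem_rng {d e : Fin 3 →₀ ℕ} (h : d ∈ rng e) : ∀ i, d i ≤ wt e := by
  rw [rng, Finset.mem_Iic, Finsupp.le_def] at h
  intro i; simpa [bnd_apply] using h i

/-- substitution of the power series `σ i` for the variables -/
noncomputable def subst (σ : Fin 3 → MvPowerSeries (Fin 3) R) (f : MvPowerSeries (Fin 3) R) :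
    MvPowerSeries (Fin 3) R :=
  fun e => ∑ d ∈ rng e, coeff d f * coeff e (∏ i, σ i ^ d i)

lemma coeff_subst (σ : Fin 3 → MvPowerSeries (Fin 3) R) (f : MvPowerSeries (Fin 3) R)
    (e : Fin 3 →₀ ℕ) :
    coeff e (subst σ f) = ∑ d ∈ rng e, coeff d f * coeff e (∏ i, σ i ^ d i) := rfl

section
variable {σ : Fin 3 → MvPowerSeries (Fin 3) R} (hσ : ∀ i, OrdN 1 (σ i))
include hσ

lemma coeff_prodpow_eq_zero {d e : Fin 3 →₀ ℕ} (h : ¬ wt d ≤ wt e) :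
    coeff e (∏ i, σ i ^ d i) = 0 :=
  ordN_prodpow hσ d e (by omega)

/-- the defining sum of `subst` may be taken over any set containing all `d` of small weight -/
lemma coeff_subst_superset (f : MvPowerSeries (Fin 3) R) (e : Fin 3 →₀ ℕ)
    (t : Finset (Fin 3 →₀ ℕ)) (ht : ∀ d, wt d ≤ wt e → d ∈ t) :
    coeff e (subst σ f) = ∑ d ∈ t, coeff d f * coeff e (∏ i, σ i ^ d i) := by
  rw [coeff_subst]
  have h1 : ∑ d ∈ rng e, coeff d f * coeff e (∏ i, σ i ^ d i)
      = ∑ d ∈ rng e ∪ t, coeff d f * coeff e (∏ i, σ i ^ d i) := by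
    refine Finset.sum_subset Finset.subset_union_left (fun d _ hd' => ?_)
    have : ¬ wt d ≤ wt e := fun h => hd' (mem_rng_of_wt_le h)
    rw [coeff_prodpow_eq_zero hσ this, mul_zero]
  have h2 : ∑ d ∈ t, coeff d f * coeff e (∏ i, σ i ^ d i)
      = ∑ d ∈ rng e ∪ t, coeff d f * coeff e (∏ i, σ i ^ d i) := by
    refine Finset.sum_subset Finset.subset_union_right (fun d _ hd' => ?_)
    have : ¬ wt d ≤ wt e := fun h => hd' (ht d h)
    rw [coeff_prodpow_eq_zero hσ this, mul_zero]
  rw [h1, h2]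

end

lemma prodpow_add (σ : Fin 3 → MvPowerSeries (Fin 3) R) (d1 d2 : Fin 3 →₀ ℕ) :
    (∏ i, σ i ^ (d1 + d2) i) = (∏ i, σ i ^ d1 i) * (∏ i, σ i ^ d2 i) := by
  rw [← Finset.prod_mul_distrib]
  exact Finset.prod_congr rfl fun i _ => by rw [Finsupp.add_apply, pow_add]

lemma subst_add (σ : Fin 3 → MvPowerSeries (Fin 3) R) (f g : MvPowerSeries (Fin 3) R) :
    subst σ (f + g) = subst σ f + subst σ g := by
  ext e
  rw [map_add, coeff_subst, coeff_subst, coeff_subst, ← Finset.sum_add_distrib]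
  exact Finset.sum_congr rfl fun d _ => by rw [map_add, add_mul]

lemma subst_zero (σ : Fin 3 → MvPowerSeries (Fin 3) R) : subst σ (0 : MvPowerSeries (Fin 3) R) = 0 := by
  ext e
  rw [coeff_subst]
  simp

lemma zero_mem_rng (e : Fin 3 →₀ ℕ) : (0 : Fin 3 →₀ ℕ) ∈ rng e :=
  mem_rng_of_wt_le (by simp [wt])

lemma prodpow_zero (σ : Fin 3 → MvPowerSeries (Fin 3) R) :
    (∏ i, σ i ^ (0 : Fin 3 →₀ ℕ) i) = 1 := by simp

lemma subst_C (σ : Fin 3 → MvPowerSeries (Fin 3) R) (a : R) :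
    subst σ (C (σ := Fin 3) (R := R) a) = C (σ := Fin 3) (R := R) a := by
  classical
  ext e
  rw [coeff_subst, Finset.sum_eq_single 0]
  · rw [prodpow_zero, coeff_one, coeff_C, coeff_C]
    simp
  · intro d _ hd
    rw [coeff_C, if_neg hd, zero_mul]
  · intro h
    exact absurd (zero_mem_rng e) h

lemma subst_one (σ : Fin 3 → MvPowerSeries (Fin 3) R) : subst σ (1 : MvPowerSeries (Fin 3) R) = 1 := by
  have := subst_C σ (1 : R)
  rwa [map_one] at this

lemma prodpow_single (σ : Fin 3 → MvPowerSeries (Fin 3) R) (i : Fin 3) :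
    (∏ j, σ j ^ (Finsupp.single i 1) j) = σ i := by
  classical
  rw [Finset.prod_eq_single i]
  · simp
  · intro j _ hj
    rw [Finsupp.single_apply, if_neg (Ne.symm hj), pow_zero]
  · simp

lemma subst_X {σ : Fin 3 → MvPowerSeries (Fin 3) R} (hσ : ∀ i, OrdN 1 (σ i)) (i : Fin 3) :
    subst σ (X i) = σ i := by
  classical
  ext e
  rw [coeff_subst_superset hσ (X i) e (insert (Finsupp.single i 1) (rng e))
    (fun d hd => Finset.mem_insert_of_mem (mem_rng_of_wt_le hd))]
  rw [Finset.sum_eq_single (Finsupp.single i 1)]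
  · rw [prodpow_single, coeff_X, if_pos rfl, one_mul]
  · intro d _ hd
    rw [coeff_X, if_neg hd, zero_mul]
  · intro h
    exact absurd (Finset.mem_insert_self _ _) h

lemma subst_mul {σ : Fin 3 → MvPowerSeries (Fin 3) R} (hσ : ∀ i, OrdN 1 (σ i))
    (f g : MvPowerSeries (Fin 3) R) :
    subst σ (f * g) = subst σ f * subst σ g := by
  classical
  ext e
  have hRHS : coeff e (subst σ f * subst σ g)
      = ∑ p ∈ rng e ×ˢ rng e, coeff p.1 f * coeff p.2 g
          * coeff e ((∏ i, σ i ^ p.1 i) * (∏ i, σ i ^ p.2 i)) := by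
    rw [coeff_mul]
    have step : ∀ q ∈ Finset.HasAntidiagonal.antidiagonal e,
        coeff q.1 (subst σ f) * coeff q.2 (subst σ g)
        = ∑ p ∈ rng e ×ˢ rng e, coeff p.1 f * coeff p.2 g
            * (coeff q.1 (∏ i, σ i ^ p.1 i) * coeff q.2 (∏ i, σ i ^ p.2 i)) := by
      intro q hq
      rw [Finset.HasAntidiagonal.mem_antidiagonal] at hq
      have hq1 : wt q.1 ≤ wt e := by rw [← hq, wt_add]; omega
      have hq2 : wt q.2 ≤ wt e := by rw [← hq, wt_add]; omega
      rw [coeff_subst_superset hσ f q.1 (rng e) (fun d hd => mem_rng_of_wt_le (le_trans hd hq1)),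
        coeff_subst_superset hσ g q.2 (rng e) (fun d hd => mem_rng_of_wt_le (le_trans hd hq2)),
        Finset.sum_mul_sum, ← Finset.sum_product']
      exact Finset.sum_congr rfl fun p _ => by ring
    rw [Finset.sum_congr rfl step, Finset.sum_comm]
    refine Finset.sum_congr rfl fun p _ => ?_
    rw [coeff_mul, Finset.mul_sum]
  rw [hRHS, coeff_subst]
  have expand : ∀ d ∈ rng e, coeff d (f * g) * coeff e (∏ i, σ i ^ d i)
      = ∑ p ∈ Finset.HasAntidiagonal.antidiagonal d, coeff p.1 f * coeff p.2 g
          * coeff e ((∏ i, σ i ^ p.1 i) * (∏ i, σ i ^ p.2 i)) := by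
    intro d _
    rw [coeff_mul, Finset.sum_mul]
    refine Finset.sum_congr rfl fun p hp => ?_
    rw [Finset.HasAntidiagonal.mem_antidiagonal] at hp
    rw [← hp, prodpow_add]
  rw [Finset.sum_congr rfl expand, Finset.sum_sigma']
  have reindex : ∑ x ∈ (rng e).sigma (fun d => Finset.HasAntidiagonal.antidiagonal d),
        (coeff x.2.1 f * coeff x.2.2 g
          * coeff e ((∏ i, σ i ^ x.2.1 i) * (∏ i, σ i ^ x.2.2 i)))
      = ∑ p ∈ (rng e ×ˢ rng e).filter (fun p => p.1 + p.2 ≤ bnd e),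
        (coeff p.1 f * coeff p.2 g
          * coeff e ((∏ i, σ i ^ p.1 i) * (∏ i, σ i ^ p.2 i))) := by
    refine Finset.sum_nbij' (fun x => x.2) (fun p => ⟨p.1 + p.2, p⟩) ?_ ?_ ?_ ?_ ?_
    · rintro ⟨d, p⟩ h
      simp only [Finset.mem_sigma, Finset.HasAntidiagonal.mem_antidiagonal] at h
      obtain ⟨hd, hp⟩ := h
      rw [rng, Finset.mem_Iic] at hd
      rw [Finset.mem_filter, Finset.mem_product, rng, Finset.mem_Iic, Finset.mem_Iic]
      exact ⟨⟨le_trans (by simp [← hp]) hd, le_trans (by simp [← hp]) hd⟩, by rw [hp]; exact hd⟩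
    · intro p hp
      rw [Finset.mem_filter] at hp
      simp only [Finset.mem_sigma, Finset.HasAntidiagonal.mem_antidiagonal]
      exact ⟨by rw [rng, Finset.mem_Iic]; exact hp.2, trivial⟩
    · rintro ⟨d, p⟩ h
      simp only [Finset.mem_sigma, Finset.HasAntidiagonal.mem_antidiagonal] at h
      simp [h.2]
    · intro p hp; rfl
    · rintro ⟨d, p⟩ h; rfl
  rw [reindex]
  refine Finset.sum_subset (Finset.filter_subset _ _) ?_
  intro p hp hp2
  rw [Finset.mem_filter, not_and] at hp2
  have hnb : ¬ p.1 + p.2 ≤ bnd e := hp2 hp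
  have hwt : ¬ wt p.1 + wt p.2 ≤ wt e := by
    intro hle
    apply hnb
    rw [Finsupp.le_def]
    intro i
    rw [bnd_apply]
    exact le_trans (le_trans (apply_le_wt _ i) (le_of_eq (wt_add _ _))) hle
  have : coeff e ((∏ i, σ i ^ p.1 i) * (∏ i, σ i ^ p.2 i)) = 0 :=
    ((ordN_prodpow hσ p.1).mul (ordN_prodpow hσ p.2)) e (by omega)
  rw [this, mul_zero]


/-- `subst` as an algebra hom -/
noncomputable def substAlgHom {σ : Fin 3 → MvPowerSeries (Fin 3) R} (hσ : ∀ i, OrdN 1 (σ i)) :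
    MvPowerSeries (Fin 3) R →ₐ[R] MvPowerSeries (Fin 3) R where
  toFun := subst σ
  map_one' := subst_one σ
  map_mul' := subst_mul hσ
  map_zero' := subst_zero σ
  map_add' := subst_add σ
  commutes' := fun a => subst_C σ a

lemma substAlgHom_apply {σ : Fin 3 → MvPowerSeries (Fin 3) R} (hσ : ∀ i, OrdN 1 (σ i))
    (f : MvPowerSeries (Fin 3) R) : substAlgHom hσ f = subst σ f := rfl

lemma eqN_zero (x y : MvPowerSeries (Fin 3) R) : EqN 0 x y :=
  fun _ he => absurd he (Nat.not_lt_zero _)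

lemma ordN_zero (x : MvPowerSeries (Fin 3) R) : OrdN 0 x :=
  fun _ he => absurd he (Nat.not_lt_zero _)

/-- continuity of subst in the main argument -/
lemma subst_eqN_f {σ : Fin 3 → MvPowerSeries (Fin 3) R} (hσ : ∀ i, OrdN 1 (σ i))
    {n : ℕ} {f g : MvPowerSeries (Fin 3) R} (h : EqN n f g) :
    EqN n (subst σ f) (subst σ g) := by
  intro e he
  rw [coeff_subst, coeff_subst]
  refine Finset.sum_congr rfl fun d _ => ?_
  rcases le_or_gt (wt d) (wt e) with hd | hd
  · rw [h d (by omega)]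
  · rw [coeff_prodpow_eq_zero hσ (by omega), mul_zero, mul_zero]

/-- continuity of subst in the substituted series -/
lemma subst_eqN_σ {σ σ' : Fin 3 → MvPowerSeries (Fin 3) R} {n : ℕ}
    (h : ∀ i, EqN n (σ i) (σ' i)) (f : MvPowerSeries (Fin 3) R) :
    EqN n (subst σ f) (subst σ' f) := by
  intro e he
  rw [coeff_subst, coeff_subst]
  refine Finset.sum_congr rfl fun d _ => ?_
  have : EqN n (∏ i, σ i ^ d i) (∏ i, σ' i ^ d i) := by
    rw [Fin.prod_univ_three, Fin.prod_univ_three]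
    exact (((h 0).pow _).mul ((h 1).pow _)).mul ((h 2).pow _)
  rw [this e he]

lemma prodpow_X (d : Fin 3 →₀ ℕ) :
    (∏ i, (X i : MvPowerSeries (Fin 3) R) ^ d i) = monomial d 1 := by
  have h1 : ((∏ i, (MvPolynomial.X i : MvPolynomial (Fin 3) R) ^ d i : MvPolynomial (Fin 3) R) :
      MvPowerSeries (Fin 3) R) = ∏ i, (X i : MvPowerSeries (Fin 3) R) ^ d i := by
    rw [← MvPolynomial.coeToMvPowerSeries.ringHom_apply, map_prod]
    exact Finset.prod_congr rfl fun i _ => by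
      rw [map_pow, MvPolynomial.coeToMvPowerSeries.ringHom_apply, MvPolynomial.coe_X]
  rw [← h1]
  have h2 : (∏ i, (MvPolynomial.X i : MvPolynomial (Fin 3) R) ^ d i)
      = MvPolynomial.monomial d (1 : R) := by
    rw [MvPolynomial.monomial_eq, map_one, one_mul, Finsupp.prod_fintype]
    intro i; exact pow_zero _
  rw [h2, MvPolynomial.coe_monomial]

lemma subst_X_id (f : MvPowerSeries (Fin 3) R) :
    subst (fun i => (X i : MvPowerSeries (Fin 3) R)) f = f := by
  classical
  ext e
  rw [coeff_subst, Finset.sum_eq_single e]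
  · rw [prodpow_X, coeff_monomial, if_pos rfl, mul_one]
  · intro d _ hd
    rw [prodpow_X, coeff_monomial, if_neg (fun h => hd h.symm), mul_zero]
  · intro h
    exact absurd (mem_rng_of_wt_le le_rfl) h

/-- difference of powers raises order -/
lemma ordN_pow_sub {x y : MvPowerSeries (Fin 3) R} (hx : OrdN 1 x) (hy : OrdN 1 y)
    (hxy : OrdN 3 (x - y)) (m : ℕ) : OrdN (m + 3) (x ^ (m + 1) - y ^ (m + 1)) := by
  induction m with
  | zero => simpa using hxy
  | succ m ih =>
    have key : x ^ (m + 2) - y ^ (m + 2)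
        = x * (x ^ (m + 1) - y ^ (m + 1)) + (x - y) * y ^ (m + 1) := by ring
    rw [key]
    intro e he
    have h2 : OrdN (m + 4) ((x - y) * y ^ (m + 1)) := by
      have := hxy.mul (hy.pow (m+1))
      exact this.mono (by omega)
    rw [map_add, (hx.mul ih) e (by omega), h2 e (by omega), add_zero]

lemma ordN_pow_sub' {x y : MvPowerSeries (Fin 3) R} (hx : OrdN 1 x) (hy : OrdN 1 y)
    (hxy : OrdN 3 (x - y)) (m : ℕ) : OrdN (m + 2) (x ^ m - y ^ m) := by
  cases m with
  | zero => intro e he; simp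
  | succ m => exact ordN_pow_sub hx hy hxy m

/-- difference of monomial substitutions raises order by 2 -/
lemma ordN_prodpow_sub {σ : Fin 3 → MvPowerSeries (Fin 3) R} (hσ : ∀ i, OrdN 1 (σ i))
    (hσ3 : ∀ i, OrdN 3 (σ i - X i)) (d : Fin 3 →₀ ℕ) :
    OrdN (wt d + 2) ((∏ i, σ i ^ d i) - ∏ i, (X i : MvPowerSeries (Fin 3) R) ^ d i) := by
  have hwt : wt d = d 0 + d 1 + d 2 := by rw [wt, Fin.sum_univ_three]
  rw [Fin.prod_univ_three, Fin.prod_univ_three]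
  have key : σ 0 ^ d 0 * σ 1 ^ d 1 * σ 2 ^ d 2
        - (X 0 : MvPowerSeries (Fin 3) R) ^ d 0 * X 1 ^ d 1 * X 2 ^ d 2
      = (σ 0 ^ d 0 - X 0 ^ d 0) * σ 1 ^ d 1 * σ 2 ^ d 2
        + (X 0:MvPowerSeries (Fin 3) R) ^ d 0 * (σ 1 ^ d 1 - X 1 ^ d 1) * σ 2 ^ d 2
        + (X 0:MvPowerSeries (Fin 3) R) ^ d 0 * X 1 ^ d 1 * (σ 2 ^ d 2 - X 2 ^ d 2) := by
    ring
  rw [key]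
  have t0 : OrdN (wt d + 2) ((σ 0 ^ d 0 - X 0 ^ d 0) * σ 1 ^ d 1 * σ 2 ^ d 2) := by
    have := ((ordN_pow_sub' (hσ 0) (ordN_X 0) (hσ3 0) (d 0)).mul ((hσ 1).pow (d 1))).mul
      ((hσ 2).pow (d 2))
    exact this.mono (by omega)
  have t1 : OrdN (wt d + 2) ((X 0:MvPowerSeries (Fin 3) R) ^ d 0 * (σ 1 ^ d 1 - X 1 ^ d 1)
      * σ 2 ^ d 2) := by
    have := (((ordN_X (R := R) 0).pow (d 0)).mul
      (ordN_pow_sub' (hσ 1) (ordN_X 1) (hσ3 1) (d 1))).mul ((hσ 2).pow (d 2))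
    exact this.mono (by omega)
  have t2 : OrdN (wt d + 2) ((X 0:MvPowerSeries (Fin 3) R) ^ d 0 * X 1 ^ d 1
      * (σ 2 ^ d 2 - X 2 ^ d 2)) := by
    have := (((ordN_X (R := R) 0).pow (d 0)).mul ((ordN_X (R := R) 1).pow (d 1))).mul
      (ordN_pow_sub' (hσ 2) (ordN_X 2) (hσ3 2) (d 2))
    exact this.mono (by omega)
  intro e he
  rw [map_add, map_add, t0 e he, t1 e he, t2 e he]
  ring

/-- `subst σ` raises the order of `f` by at least 2 beyond `f` itself -/
lemma ordN_subst_sub {σ : Fin 3 → MvPowerSeries (Fin 3) R} (hσ : ∀ i, OrdN 1 (σ i))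
    (hσ3 : ∀ i, OrdN 3 (σ i - X i)) {n : ℕ} {f : MvPowerSeries (Fin 3) R} (hf : OrdN n f) :
    OrdN (n + 2) (subst σ f - f) := by
  intro e he
  rw [map_sub]
  conv_lhs => rw [show (coeff e) f = coeff e (subst (fun i => (X i : MvPowerSeries (Fin 3) R)) f) by rw [subst_X_id]]
  rw [coeff_subst, coeff_subst, ← Finset.sum_sub_distrib]
  refine Finset.sum_eq_zero fun d _ => ?_
  rcases lt_or_ge (wt d) n with hd | hd
  · rw [hf d hd, zero_mul, zero_mul, sub_self]
  · rw [← mul_sub]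
    have := ordN_prodpow_sub hσ hσ3 d
    rw [show ((coeff e) (∏ i, σ i ^ d i) - (coeff e) (∏ i, (X i : MvPowerSeries (Fin 3) R) ^ d i)) = coeff e ((∏ i, σ i ^ d i) - ∏ i, (X i : MvPowerSeries (Fin 3) R) ^ d i) by rw [map_sub]]
    rw [this e (by omega), mul_zero]


/-- coefficient-wise limit of a Cauchy sequence -/
noncomputable def limitSeq (F : ℕ → MvPowerSeries (Fin 3) R) : MvPowerSeries (Fin 3) R :=
  fun e => coeff e (F (wt e + 1))

lemma chain {F : ℕ → MvPowerSeries (Fin 3) R} (hF : ∀ n, EqN n (F n) (F (n + 1))) :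
    ∀ n m, n ≤ m → EqN n (F n) (F m) := by
  intro n m hnm
  induction m with
  | zero =>
    have : n = 0 := by omega
    subst this; exact EqN.refl _ _
  | succ m ih =>
    rcases Nat.lt_or_ge n (m + 1) with h | h
    · exact (ih (by omega)).trans ((hF m).mono (by omega))
    · have : n = m + 1 := by omega
      subst this; exact EqN.refl _ _

lemma limitSeq_eqN {F : ℕ → MvPowerSeries (Fin 3) R} (hF : ∀ n, EqN n (F n) (F (n + 1)))
    {n m : ℕ} (hnm : n ≤ m) : EqN n (limitSeq F) (F m) := by
  intro e he
  have h1 : coeff e (limitSeq F) = coeff e (F (wt e + 1)) := rfl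
  rw [h1]
  rcases le_or_gt (wt e + 1) m with h | h
  · exact chain hF (wt e + 1) m h e (by omega)
  · exact (chain hF m (wt e + 1) (by omega) e (by omega)).symm

section Bij
variable {σ : Fin 3 → MvPowerSeries (Fin 3) R} (hσ : ∀ i, OrdN 1 (σ i))
  (hσ3 : ∀ i, OrdN 3 (σ i - X i))
include hσ hσ3

lemma subst_injective : Function.Injective (subst σ) := by
  intro f g hfg
  have h0 : subst σ (f - g) = 0 := by
    rw [show f - g = f + (-1) * g by ring, subst_add, subst_mul hσ,
      show ((-1 : MvPowerSeries (Fin 3) R)) = C (σ := Fin 3) (R := R) (-1) by simp, subst_C, hfg]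
    simp
  have key : ∀ n, OrdN n (f - g) := by
    intro n
    induction n with
    | zero => exact ordN_zero _
    | succ n ih =>
      have := ordN_subst_sub hσ hσ3 ih
      rw [h0, zero_sub] at this
      intro e he
      have := this e (by omega)
      rw [map_neg, neg_eq_zero] at this
      exact this
  have : f - g = 0 := by
    ext e
    rw [map_zero]
    exact key (wt e + 1) e (by omega)
  exact sub_eq_zero.mp this

lemma subst_surjective : Function.Surjective (subst σ) := by
  intro h
  -- iterative approximation
  let F : ℕ → MvPowerSeries (Fin 3) R := fun n =>
    Nat.rec 0 (fun _ x => x + (h - subst σ x)) n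
  have hF0 : F 0 = 0 := rfl
  have hFs : ∀ n, F (n + 1) = F n + (h - subst σ (F n)) := fun n => rfl
  have herr : ∀ n, OrdN n (h - subst σ (F n)) := by
    intro n
    induction n with
    | zero => exact ordN_zero _
    | succ n ih =>
      have hstep : h - subst σ (F (n + 1))
          = -(subst σ (h - subst σ (F n)) - (h - subst σ (F n))) := by
        rw [hFs n, subst_add σ]
        ring
      rw [hstep]
      intro e he
      rw [map_neg, (ordN_subst_sub hσ hσ3 ih) e (by omega), neg_zero]
  have hcauchy : ∀ n, EqN n (F n) (F (n + 1)) := by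
    intro n
    apply EqN.of_sub
    intro e he
    rw [hFs n, show F n - (F n + (h - subst σ (F n))) = -(h - subst σ (F n)) by ring,
      map_neg, herr n e he, neg_zero]
  refine ⟨limitSeq F, ?_⟩
  apply eq_of_forall_eqN
  intro n
  have h1 : EqN n (subst σ (limitSeq F)) (subst σ (F n)) :=
    subst_eqN_f hσ (limitSeq_eqN hcauchy le_rfl)
  refine h1.trans ?_
  intro e he
  have := herr n e he
  rw [map_sub, sub_eq_zero] at this
  exact this.symm

end Bij


lemma OrdN.mul_right {n : ℕ} {x : MvPowerSeries (Fin 3) R} (hx : OrdN n x)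
    (y : MvPowerSeries (Fin 3) R) : OrdN n (x * y) := by
  simpa using hx.mul (ordN_zero y)

/-- existence of fixed points for contracting maps on pairs -/
lemma exists_fixed_point (G : MvPowerSeries (Fin 3) R × MvPowerSeries (Fin 3) R →
      MvPowerSeries (Fin 3) R × MvPowerSeries (Fin 3) R)
    (hG : ∀ n p q, EqN n p.1 q.1 → EqN n p.2 q.2 →
      EqN (n + 1) (G p).1 (G q).1 ∧ EqN (n + 1) (G p).2 (G q).2) :
    ∃ p, G p = p := by
  let F : ℕ → MvPowerSeries (Fin 3) R × MvPowerSeries (Fin 3) R := fun n =>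
    Nat.rec (0, 0) (fun _ p => G p) n
  have hFs : ∀ n, F (n + 1) = G (F n) := fun n => rfl
  have hc : ∀ n, EqN n (F n).1 (F (n + 1)).1 ∧ EqN n (F n).2 (F (n + 1)).2 := by
    intro n
    induction n with
    | zero => exact ⟨eqN_zero _ _, eqN_zero _ _⟩
    | succ n ih =>
      rw [hFs (n + 1), hFs n]
      exact hG n _ _ ih.1 ih.2
  set A := limitSeq (fun n => (F n).1) with hA_def
  set B := limitSeq (fun n => (F n).2) with hB_def
  have hA : ∀ n, EqN n A (F n).1 := fun n => limitSeq_eqN (fun m => (hc m).1) le_rfl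
  have hB : ∀ n, EqN n B (F n).2 := fun n => limitSeq_eqN (fun m => (hc m).2) le_rfl
  refine ⟨(A, B), Prod.ext ?_ ?_⟩
  · apply eq_of_forall_eqN
    intro m
    cases m with
    | zero => exact eqN_zero _ _
    | succ n =>
      have h1 := (hG n (A, B) (F n) (hA n) (hB n)).1
      rw [← hFs] at h1
      exact h1.trans (hA (n + 1)).symm
  · apply eq_of_forall_eqN
    intro m
    cases m with
    | zero => exact eqN_zero _ _
    | succ n =>
      have h1 := (hG n (A, B) (F n) (hA n) (hB n)).2
      rw [← hFs] at h1
      exact h1.trans (hB (n + 1)).symm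

end Stmt16Aux

open Stmt16Aux

/-- In `R[[a,b,c]]` (with `R` an algebra over a field of characteristic 2), for
`f = c² + a³ + b³` and any `g` in the ideal `(a³b², a²b³)` there is an `R`-algebra
automorphism `φ` with `φ(f + g) = f`; in particular
`R[[a,b,c]]/(c² + a³ + b³ + s²a³b² + r²a²b³) ≅ R[[a,b,c]]/(c² + a³ + b³)` for all
`r, s ∈ R`. -/
theorem stmt16 (k : Type*) [Field k] [CharP k 2]
    (R : Type*) [CommRing R] [Algebra k R] (r s : R)
    (g : MvPowerSeries (Fin 3) R)
    (hg : g ∈ Ideal.span {(X 0 : MvPowerSeries (Fin 3) R) ^ 3 * (X 1) ^ 2,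
      (X 0) ^ 2 * (X 1) ^ 3}) :
    (∃ φ : MvPowerSeries (Fin 3) R ≃ₐ[R] MvPowerSeries (Fin 3) R,
      φ (((X 2 : MvPowerSeries (Fin 3) R) ^ 2 + (X 0) ^ 3 + (X 1) ^ 3) + g)
        = (X 2) ^ 2 + (X 0) ^ 3 + (X 1) ^ 3) ∧
    Nonempty ((MvPowerSeries (Fin 3) R ⧸ Ideal.span
        {(X 2 : MvPowerSeries (Fin 3) R) ^ 2 + (X 0) ^ 3 + (X 1) ^ 3
          + (C (σ := Fin 3) (R := R)) (s ^ 2) * (X 0) ^ 3 * (X 1) ^ 2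
          + (C (σ := Fin 3) (R := R)) (r ^ 2) * (X 0) ^ 2 * (X 1) ^ 3}) ≃ₐ[R]
      (MvPowerSeries (Fin 3) R ⧸ Ideal.span
        {(X 2 : MvPowerSeries (Fin 3) R) ^ 2 + (X 0) ^ 3 + (X 1) ^ 3})) := by
  have h2k : (2 : k) = 0 := by exact_mod_cast CharP.cast_eq_zero k 2
  have h2R : (2 : R) = 0 := by
    rw [← map_ofNat (algebraMap k R) 2, h2k, map_zero]
  have h2S : (2 : MvPowerSeries (Fin 3) R) = 0 := by
    rw [← map_ofNat (C (σ := Fin 3) (R := R)) 2, h2R, map_zero]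
  -- the key construction, for an arbitrary element of the ideal
  have key : ∀ g' ∈ Ideal.span {(X 0 : MvPowerSeries (Fin 3) R) ^ 3 * (X 1) ^ 2,
      (X 0) ^ 2 * (X 1) ^ 3},
      ∃ φ : MvPowerSeries (Fin 3) R ≃ₐ[R] MvPowerSeries (Fin 3) R,
        φ (((X 2 : MvPowerSeries (Fin 3) R) ^ 2 + (X 0) ^ 3 + (X 1) ^ 3) + g')
          = (X 2) ^ 2 + (X 0) ^ 3 + (X 1) ^ 3 := by
    intro g' hg'
    rw [Ideal.mem_span_pair] at hg'
    obtain ⟨P, Q, hPQ⟩ := hg'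
    -- the contraction map
    set σfun : MvPowerSeries (Fin 3) R × MvPowerSeries (Fin 3) R → Fin 3 → MvPowerSeries (Fin 3) R :=
      fun p => ![X 0 * (1 + X 1 ^ 2 * p.1), X 1 * (1 + X 0 ^ 2 * p.2), X 2] with hσfun
    set Gmap : MvPowerSeries (Fin 3) R × MvPowerSeries (Fin 3) R →
        MvPowerSeries (Fin 3) R × MvPowerSeries (Fin 3) R := fun p =>
      (X 1 ^ 2 * p.1 ^ 2 + X 1 ^ 4 * p.1 ^ 3
          + Stmt16Aux.subst (σfun p) P * (1 + X 1 ^ 2 * p.1) ^ 3 * (1 + X 0 ^ 2 * p.2) ^ 2,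
        X 0 ^ 2 * p.2 ^ 2 + X 0 ^ 4 * p.2 ^ 3
          + Stmt16Aux.subst (σfun p) Q * (1 + X 1 ^ 2 * p.1) ^ 2 * (1 + X 0 ^ 2 * p.2) ^ 3) with hGmap
    have ordX2 : ∀ i : Fin 3, OrdN 2 ((X i : MvPowerSeries (Fin 3) R) ^ 2) := fun i => by
      simpa using (ordN_X (R := R) i).pow 2
    have hG : ∀ n p q, EqN n p.1 q.1 → EqN n p.2 q.2 →
        EqN (n + 1) ((Gmap p).1 : MvPowerSeries (Fin 3) R) (Gmap q).1 ∧
          EqN (n + 1) (Gmap p).2 (Gmap q).2 := by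
      intro n p q h1 h2
      have hσpq : ∀ i, EqN (n + 3) (σfun p i) (σfun q i) := by
        intro i
        fin_cases i
        · show EqN (n + 3) (X 0 * (1 + X 1 ^ 2 * p.1)) (X 0 * (1 + X 1 ^ 2 * q.1))
          have inner : EqN (n + 2) (1 + X 1 ^ 2 * p.1) (1 + X 1 ^ 2 * q.1) :=
            (EqN.refl _ _).add ((h1).mul_ord (u := X 1 ^ 2) (ordX2 1) |>.mono le_rfl)
          exact (inner.mul_ord (u := X 0) (ordN_X 0)).mono (by omega)
        · show EqN (n + 3) (X 1 * (1 + X 0 ^ 2 * p.2)) (X 1 * (1 + X 0 ^ 2 * q.2))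
          have inner : EqN (n + 2) (1 + X 0 ^ 2 * p.2) (1 + X 0 ^ 2 * q.2) :=
            (EqN.refl _ _).add ((h2).mul_ord (u := X 0 ^ 2) (ordX2 0) |>.mono le_rfl)
          exact (inner.mul_ord (u := X 1) (ordN_X 1)).mono (by omega)
        · exact EqN.refl _ _
      have u3 : EqN (n + 2) ((1 + X 1 ^ 2 * p.1) : MvPowerSeries (Fin 3) R)
          (1 + X 1 ^ 2 * q.1) :=
        (EqN.refl _ _).add (h1.mul_ord (ordX2 1))
      have v3 : EqN (n + 2) ((1 + X 0 ^ 2 * p.2) : MvPowerSeries (Fin 3) R)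
          (1 + X 0 ^ 2 * q.2) :=
        (EqN.refl _ _).add (h2.mul_ord (ordX2 0))
      constructor
      · show EqN (n + 1) (X 1 ^ 2 * p.1 ^ 2 + X 1 ^ 4 * p.1 ^ 3
          + Stmt16Aux.subst (σfun p) P * (1 + X 1 ^ 2 * p.1) ^ 3 * (1 + X 0 ^ 2 * p.2) ^ 2) _
        refine EqN.add (EqN.add ?_ ?_) ?_
        · exact ((h1.pow 2).mul_ord (ordX2 1)).mono (by omega)
        · have o4 : OrdN 2 ((X 1 : MvPowerSeries (Fin 3) R) ^ 4) := by
            simpa using ((ordN_X (R := R) 1).pow 4).mono (by omega)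
          exact ((h1.pow 3).mul_ord o4).mono (by omega)
        · have hsub : EqN (n + 1) (Stmt16Aux.subst (σfun p) P) (Stmt16Aux.subst (σfun q) P) :=
            (Stmt16Aux.subst_eqN_σ hσpq P).mono (by omega)
          exact (hsub.mul ((u3.pow 3).mono (by omega))).mul ((v3.pow 2).mono (by omega))
      · show EqN (n + 1) (X 0 ^ 2 * p.2 ^ 2 + X 0 ^ 4 * p.2 ^ 3
          + Stmt16Aux.subst (σfun p) Q * (1 + X 1 ^ 2 * p.1) ^ 2 * (1 + X 0 ^ 2 * p.2) ^ 3) _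
        refine EqN.add (EqN.add ?_ ?_) ?_
        · exact ((h2.pow 2).mul_ord (ordX2 0)).mono (by omega)
        · have o4 : OrdN 2 ((X 0 : MvPowerSeries (Fin 3) R) ^ 4) := by
            simpa using ((ordN_X (R := R) 0).pow 4).mono (by omega)
          exact ((h2.pow 3).mul_ord o4).mono (by omega)
        · have hsub : EqN (n + 1) (Stmt16Aux.subst (σfun p) Q) (Stmt16Aux.subst (σfun q) Q) :=
            (Stmt16Aux.subst_eqN_σ hσpq Q).mono (by omega)
          exact (hsub.mul ((u3.pow 2).mono (by omega))).mul ((v3.pow 3).mono (by omega))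
    obtain ⟨⟨α, β⟩, hfix⟩ := exists_fixed_point Gmap hG
    have hα : X 1 ^ 2 * α ^ 2 + X 1 ^ 4 * α ^ 3
        + Stmt16Aux.subst (σfun (α, β)) P * (1 + X 1 ^ 2 * α) ^ 3 * (1 + X 0 ^ 2 * β) ^ 2 = α := by
      have := congrArg Prod.fst hfix
      simpa [hGmap] using this
    have hβ : X 0 ^ 2 * β ^ 2 + X 0 ^ 4 * β ^ 3
        + Stmt16Aux.subst (σfun (α, β)) Q * (1 + X 1 ^ 2 * α) ^ 2 * (1 + X 0 ^ 2 * β) ^ 3 = β := by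
      have := congrArg Prod.snd hfix
      simpa [hGmap] using this
    set σ : Fin 3 → MvPowerSeries (Fin 3) R := σfun (α, β) with hσdef
    have hσ : ∀ i, OrdN 1 (σ i) := by
      intro i
      fin_cases i
      · exact (ordN_X 0).mul_right _
      · exact (ordN_X 1).mul_right _
      · exact ordN_X 2
    have hσ3 : ∀ i, OrdN 3 (σ i - X i) := by
      intro i
      fin_cases i
      · show OrdN 3 (X 0 * (1 + X 1 ^ 2 * α) - X 0)
        have heq : (X 0 : MvPowerSeries (Fin 3) R) * (1 + X 1 ^ 2 * α) - X 0
            = (X 0 * X 1 ^ 2) * α := by ring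
        rw [heq]
        exact (((ordN_X 0).mul (ordX2 1)).mul_right α)
      · show OrdN 3 (X 1 * (1 + X 0 ^ 2 * β) - X 1)
        have heq : (X 1 : MvPowerSeries (Fin 3) R) * (1 + X 0 ^ 2 * β) - X 1
            = (X 1 * X 0 ^ 2) * β := by ring
        rw [heq]
        exact (((ordN_X 1).mul (ordX2 0)).mul_right β)
      · show OrdN 3 ((X 2 : MvPowerSeries (Fin 3) R) - X 2)
        intro e he
        simp
    set φ : MvPowerSeries (Fin 3) R →ₐ[R] MvPowerSeries (Fin 3) R := Stmt16Aux.substAlgHom hσ with hφdef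
    have hbij : Function.Bijective φ := ⟨Stmt16Aux.subst_injective hσ hσ3, Stmt16Aux.subst_surjective hσ hσ3⟩
    refine ⟨AlgEquiv.ofBijective φ hbij, ?_⟩
    show φ _ = _
    have e0 : φ (X 0) = X 0 * (1 + X 1 ^ 2 * α) := by
      rw [hφdef, Stmt16Aux.substAlgHom_apply, Stmt16Aux.subst_X hσ]
      rfl
    have e1 : φ (X 1) = X 1 * (1 + X 0 ^ 2 * β) := by
      rw [hφdef, Stmt16Aux.substAlgHom_apply, Stmt16Aux.subst_X hσ]
      rfl
    have e2 : φ (X 2) = X 2 := by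
      rw [hφdef, Stmt16Aux.substAlgHom_apply, Stmt16Aux.subst_X hσ]
      rfl
    have eP : φ P = Stmt16Aux.subst σ P := rfl
    have eQ : φ Q = Stmt16Aux.subst σ Q := rfl
    rw [← hPQ]
    simp only [map_add, map_mul, map_pow, e0, e1, e2, eP, eQ]
    have hα' : X 1 ^ 2 * α ^ 2 + X 1 ^ 4 * α ^ 3
        + Stmt16Aux.subst σ P * (1 + X 1 ^ 2 * α) ^ 3 * (1 + X 0 ^ 2 * β) ^ 2 = α := hα
    have hβ' : X 0 ^ 2 * β ^ 2 + X 0 ^ 4 * β ^ 3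
        + Stmt16Aux.subst σ Q * (1 + X 1 ^ 2 * α) ^ 2 * (1 + X 0 ^ 2 * β) ^ 3 = β := hβ
    linear_combination (X 0 ^ 3 * X 1 ^ 2) * hα' + (X 0 ^ 2 * X 1 ^ 3) * hβ'
      + (2 * X 0 ^ 2 * X 1 ^ 3 * β + 2 * X 0 ^ 3 * X 1 ^ 2 * α
        + X 0 ^ 3 * X 1 ^ 4 * α ^ 2 + X 0 ^ 4 * X 1 ^ 3 * β ^ 2) * h2S
  constructor
  · exact key g hg
  · -- quotient isomorphism
    set A := (X 0 : MvPowerSeries (Fin 3) R) ^ 3 * (X 1) ^ 2 with hA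
    set B := (X 0 : MvPowerSeries (Fin 3) R) ^ 2 * (X 1) ^ 3 with hB
    have hmem : C (σ := Fin 3) (R := R) (s ^ 2) * (X 0) ^ 3 * (X 1) ^ 2
        + C (σ := Fin 3) (R := R) (r ^ 2) * (X 0) ^ 2 * (X 1) ^ 3 ∈ Ideal.span {A, B} := by
      rw [Ideal.mem_span_pair]
      exact ⟨C (σ := Fin 3) (R := R) (s ^ 2), C (σ := Fin 3) (R := R) (r ^ 2), by rw [hA, hB]; ring⟩
    obtain ⟨φ, hφ⟩ := key _ hmem
    have hgen : (X 2 : MvPowerSeries (Fin 3) R) ^ 2 + (X 0) ^ 3 + (X 1) ^ 3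
          + (C (σ := Fin 3) (R := R)) (s ^ 2) * (X 0) ^ 3 * (X 1) ^ 2
          + (C (σ := Fin 3) (R := R)) (r ^ 2) * (X 0) ^ 2 * (X 1) ^ 3
        = ((X 2 : MvPowerSeries (Fin 3) R) ^ 2 + (X 0) ^ 3 + (X 1) ^ 3)
          + (C (σ := Fin 3) (R := R) (s ^ 2) * (X 0) ^ 3 * (X 1) ^ 2
            + C (σ := Fin 3) (R := R) (r ^ 2) * (X 0) ^ 2 * (X 1) ^ 3) := by ring
    refine ⟨Ideal.quotientEquivAlg _ _ φ ?_⟩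
    rw [Ideal.map_span, Set.image_singleton]
    congr 1
    have hcoe : ((φ : MvPowerSeries (Fin 3) R →+* MvPowerSeries (Fin 3) R) :
        MvPowerSeries (Fin 3) R → MvPowerSeries (Fin 3) R) = φ := rfl
    rw [hcoe, hgen, hφ]
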